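/- Let q be a prime power and m = d·e with integers d, e ≥ 2, and let l ≥ 1. Then μ_q(m,l) ≤ μ_q(d) · μ_{q^d}(e,l), and likewise μ^sym_q(m,l) ≤ μ^sym_q(d) · μ^sym_{q^d}(e,l). In particular μ₃(4,2) ≤ μ₃(2)·μ₉(2,2) and μ₂(4,2) ≤ μ₂(2)·μ₄(2,2). -/

import Mathlib

open Finset

/-- The bilinear complexity of a `K`-algebra `A`. -/
noncomputable def mu (K A : Type*) [Field K] [NonUnitalNonAssocRing A] [Module K A] : ℕ :=
  sInf {n : ℕ | ∃ (φ ψ : Fin n → (A →ₗ[K] K)) (w : Fin n → A),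
    ∀ x y : A, x * y = ∑ i, (φ i x * ψ i y) • w i}

/-- The symmetric bilinear complexity of a `K`-algebra `A`. -/
noncomputable def muSym (K A : Type*) [Field K] [NonUnitalNonAssocRing A] [Module K A] : ℕ :=
  sInf {n : ℕ | ∃ (φ : Fin n → (A →ₗ[K] K)) (w : Fin n → A),
    ∀ x y : A, x * y = ∑ i, (φ i x * φ i y) • w i}

/-- The truncated polynomial algebra `L[t]/(t^l)`. -/
abbrev TruncAlg (L : Type*) [CommRing L] (l : ℕ) : Type _ :=
  Polynomial L ⧸ Ideal.span {(Polynomial.X : Polynomial L) ^ l}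

section Helpers

/-- Transfer a bilinear multiplication formula indexed by an arbitrary fintype to one
indexed by `Fin (card ι)`. -/
lemma mu_mem_of_index {K A : Type*} [Field K] [NonUnitalNonAssocRing A] [Module K A]
    (ι : Type*) [Fintype ι] (φ ψ : ι → (A →ₗ[K] K)) (w : ι → A)
    (h : ∀ x y : A, x * y = ∑ i, (φ i x * ψ i y) • w i) :
    Fintype.card ι ∈ {n : ℕ | ∃ (φ ψ : Fin n → (A →ₗ[K] K)) (w : Fin n → A),
      ∀ x y : A, x * y = ∑ i, (φ i x * ψ i y) • w i} := by
  classical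
  let e := Fintype.equivFin ι
  refine ⟨φ ∘ e.symm, ψ ∘ e.symm, w ∘ e.symm, fun x y => ?_⟩
  rw [h x y]
  exact Fintype.sum_equiv e _ _ (fun i => by simp)

lemma muSym_mem_of_index {K A : Type*} [Field K] [NonUnitalNonAssocRing A] [Module K A]
    (ι : Type*) [Fintype ι] (φ : ι → (A →ₗ[K] K)) (w : ι → A)
    (h : ∀ x y : A, x * y = ∑ i, (φ i x * φ i y) • w i) :
    Fintype.card ι ∈ {n : ℕ | ∃ (φ : Fin n → (A →ₗ[K] K)) (w : Fin n → A),
      ∀ x y : A, x * y = ∑ i, (φ i x * φ i y) • w i} := by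
  classical
  let e := Fintype.equivFin ι
  refine ⟨φ ∘ e.symm, w ∘ e.symm, fun x y => ?_⟩
  rw [h x y]
  exact Fintype.sum_equiv e _ _ (fun i => by simp)

lemma basis_expand {K A : Type*} [Field K] [CommRing A] [Algebra K A] {ι : Type*} [Fintype ι]
    (b : Module.Basis ι K A) (x y : A) :
    x * y = ∑ i, ∑ j, (b.coord i x * b.coord j y) • (b i * b j) := by
  conv_lhs => rw [← b.sum_repr x, ← b.sum_repr y]
  rw [Finset.sum_mul_sum]
  exact Finset.sum_congr rfl fun i _ => Finset.sum_congr rfl fun j _ => by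
    rw [Module.Basis.coord_apply, Module.Basis.coord_apply, smul_mul_smul_comm]

lemma sum_triangle {M : Type*} [AddCommMonoid M] {n : ℕ} (g : Fin n → Fin n → M) :
    (∑ i, ∑ j, ((if i < j then g i j else 0) + (if i < j then g j i else 0)
      + (if i = j then g i j else 0))) = ∑ i, ∑ j, g i j := by
  have key : ∀ i j : Fin n, (if i < j then g i j else 0) + (if j < i then g i j else 0)
      + (if i = j then g i j else 0) = g i j := by
    intro i j
    rcases lt_trichotomy i j with h | h | h
    · simp [h, h.ne, asymm h]
    · simp [h]
    · simp [h, h.ne', asymm h]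
  have h2 : (∑ i, ∑ j, (if i < j then g j i else 0))
      = ∑ i, ∑ j, (if j < i then g i j else 0) := Finset.sum_comm
  calc ∑ i, ∑ j, ((if i < j then g i j else 0) + (if i < j then g j i else 0)
        + (if i = j then g i j else 0))
      = (∑ i, ∑ j, (if i < j then g i j else 0)) + (∑ i, ∑ j, (if i < j then g j i else 0))
        + ∑ i, ∑ j, (if i = j then g i j else 0) := by
        simp [Finset.sum_add_distrib]
    _ = (∑ i, ∑ j, (if i < j then g i j else 0)) + (∑ i, ∑ j, (if j < i then g i j else 0))
        + ∑ i, ∑ j, (if i = j then g i j else 0) := by rw [h2]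
    _ = ∑ i, ∑ j, ((if i < j then g i j else 0) + (if j < i then g i j else 0)
        + (if i = j then g i j else 0)) := by simp [Finset.sum_add_distrib]
    _ = ∑ i, ∑ j, g i j := by simp only [key]

lemma mu_set_nonempty (K A : Type*) [Field K] [CommRing A] [Algebra K A] [Module.Finite K A] :
    {n : ℕ | ∃ (φ ψ : Fin n → (A →ₗ[K] K)) (w : Fin n → A),
      ∀ x y : A, x * y = ∑ i, (φ i x * ψ i y) • w i}.Nonempty := by
  classical
  let b := Module.finBasis K A
  refine ⟨_, mu_mem_of_index (Fin (Module.finrank K A) × Fin (Module.finrank K A))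
    (fun p => b.coord p.1) (fun p => b.coord p.2) (fun p => b p.1 * b p.2) (fun x y => ?_)⟩
  rw [basis_expand b x y]
  simp [Fintype.sum_prod_type]

lemma muSym_set_nonempty (K A : Type*) [Field K] [CommRing A] [Algebra K A] [Module.Finite K A] :
    {n : ℕ | ∃ (φ : Fin n → (A →ₗ[K] K)) (w : Fin n → A),
      ∀ x y : A, x * y = ∑ i, (φ i x * φ i y) • w i}.Nonempty := by
  classical
  let b := Module.finBasis K A
  set n := Module.finrank K A with hn
  refine ⟨_, muSym_mem_of_index ((Fin n × Fin n) × Fin 3)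
    (fun p => ![b.coord p.1.1 + b.coord p.1.2, b.coord p.1.1, b.coord p.1.2] p.2)
    (fun p => ![if p.1.1 < p.1.2 then b p.1.1 * b p.1.2 else 0,
        (if p.1.1 = p.1.2 then b p.1.1 * b p.1.2 else 0)
          - (if p.1.1 < p.1.2 then b p.1.1 * b p.1.2 else 0),
        -(if p.1.1 < p.1.2 then b p.1.1 * b p.1.2 else 0)] p.2) (fun x y => ?_)⟩
  rw [basis_expand b x y,
    ← sum_triangle (fun i j => (b.coord i x * b.coord j y) • (b i * b j)),
    Fintype.sum_prod_type, Fintype.sum_prod_type]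
  refine Finset.sum_congr rfl fun i _ => Finset.sum_congr rfl fun j _ => ?_
  rw [Fin.sum_univ_three]
  simp only [Matrix.cons_val_zero, Matrix.cons_val_one, Matrix.head_cons, Matrix.cons_val_two,
    Matrix.tail_cons, LinearMap.add_apply]
  rcases lt_trichotomy i j with h | h | h
  · simp only [if_pos h, if_neg h.ne]
    have hc : b j * b i = b i * b j := mul_comm _ _
    rw [hc]
    ring_nf
    module
  · simp only [if_neg h.symm.not_gt, if_pos h]
    subst h
    ring_nf
    module
  · simp only [if_neg (asymm h), if_neg h.ne']
    ring_nf
    module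

lemma mu_comp_mem {K F A : Type*} [Field K] [Field F] [Algebra K F]
    [NonUnitalNonAssocRing A] [Module K A] [Module F A] [IsScalarTower K F A] {n₁ n₂ : ℕ}
    (h₁ : n₁ ∈ {n : ℕ | ∃ (φ ψ : Fin n → (F →ₗ[K] K)) (w : Fin n → F),
      ∀ x y : F, x * y = ∑ i, (φ i x * ψ i y) • w i})
    (h₂ : n₂ ∈ {n : ℕ | ∃ (φ ψ : Fin n → (A →ₗ[F] F)) (w : Fin n → A),
      ∀ x y : A, x * y = ∑ i, (φ i x * ψ i y) • w i}) :
    n₁ * n₂ ∈ {n : ℕ | ∃ (φ ψ : Fin n → (A →ₗ[K] K)) (w : Fin n → A),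
      ∀ x y : A, x * y = ∑ i, (φ i x * ψ i y) • w i} := by
  obtain ⟨φ, ψ, u, hf⟩ := h₁
  obtain ⟨Φ, Ψ, w, hA⟩ := h₂
  have key := mu_mem_of_index (K := K) (A := A) (Fin n₁ × Fin n₂)
    (fun p => (φ p.1).comp ((Φ p.2).restrictScalars K))
    (fun p => (ψ p.1).comp ((Ψ p.2).restrictScalars K))
    (fun p => u p.1 • w p.2) ?_
  · simpa using key
  intro x y
  rw [hA x y]
  conv_rhs => rw [Fintype.sum_prod_type, Finset.sum_comm]
  refine Finset.sum_congr rfl fun j _ => ?_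
  rw [hf (Φ j x) (Ψ j y), Finset.sum_smul]
  exact Finset.sum_congr rfl fun i _ => by
    simp only [LinearMap.coe_comp, Function.comp_apply, LinearMap.coe_restrictScalars]
    rw [smul_assoc]

lemma muSym_comp_mem {K F A : Type*} [Field K] [Field F] [Algebra K F]
    [NonUnitalNonAssocRing A] [Module K A] [Module F A] [IsScalarTower K F A] {n₁ n₂ : ℕ}
    (h₁ : n₁ ∈ {n : ℕ | ∃ (φ : Fin n → (F →ₗ[K] K)) (w : Fin n → F),
      ∀ x y : F, x * y = ∑ i, (φ i x * φ i y) • w i})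
    (h₂ : n₂ ∈ {n : ℕ | ∃ (φ : Fin n → (A →ₗ[F] F)) (w : Fin n → A),
      ∀ x y : A, x * y = ∑ i, (φ i x * φ i y) • w i}) :
    n₁ * n₂ ∈ {n : ℕ | ∃ (φ : Fin n → (A →ₗ[K] K)) (w : Fin n → A),
      ∀ x y : A, x * y = ∑ i, (φ i x * φ i y) • w i} := by
  obtain ⟨φ, u, hf⟩ := h₁
  obtain ⟨Φ, w, hA⟩ := h₂
  have key := muSym_mem_of_index (K := K) (A := A) (Fin n₁ × Fin n₂)
    (fun p => (φ p.1).comp ((Φ p.2).restrictScalars K))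
    (fun p => u p.1 • w p.2) ?_
  · simpa using key
  intro x y
  rw [hA x y]
  conv_rhs => rw [Fintype.sum_prod_type, Finset.sum_comm]
  refine Finset.sum_congr rfl fun j _ => ?_
  rw [hf (Φ j x) (Φ j y), Finset.sum_smul]
  exact Finset.sum_congr rfl fun i _ => by
    simp only [LinearMap.coe_comp, Function.comp_apply, LinearMap.coe_restrictScalars]
    rw [smul_assoc]

lemma finite_trunc (L : Type*) [CommRing L] [Nontrivial L] [Finite L] (l : ℕ) : Finite (TruncAlg L l) := by
  classical
  refine Finite.of_surjective (fun c : Fin l → L =>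
    (Ideal.Quotient.mk _ (∑ i : Fin l, Polynomial.monomial (i : ℕ) (c i)) : TruncAlg L l)) ?_
  intro z
  obtain ⟨p, rfl⟩ := Ideal.Quotient.mk_surjective z
  refine ⟨fun i => (p %ₘ Polynomial.X ^ l).coeff i, ?_⟩
  have hm : (Polynomial.X ^ l : Polynomial L).Monic := Polynomial.monic_X_pow l
  have hdeg : (Polynomial.X ^ l : Polynomial L).degree ≤ (l : ℕ) :=
    le_of_eq (Polynomial.degree_X_pow l)
  simp only
  rw [Polynomial.sum_modByMonic_coeff hm hdeg]
  refine Ideal.Quotient.eq.mpr ?_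
  rw [Polynomial.modByMonic_eq_sub_mul_div p (Polynomial.X ^ l), sub_sub_cancel_left]
  exact neg_mem (Ideal.mem_span_singleton.mpr (dvd_mul_right _ _))

end Helpers

/-- If `m = d·e` with `d, e ≥ 2` and `l ≥ 1`, then, with `K = 𝔽_q`, `F = 𝔽_{q^d}` and
`L = 𝔽_{q^m} = 𝔽_{(q^d)^e}`: `μ_q(m,l) ≤ μ_q(d) · μ_{q^d}(e,l)`, and likewise for the
symmetric bilinear complexities.  In particular (taking `q = 3, d = e = l = 2`, resp.
`q = 2, d = e = l = 2`) one gets `μ₃(4,2) ≤ μ₃(2)·μ₉(2,2)` and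
`μ₂(4,2) ≤ μ₂(2)·μ₄(2,2)`. -/
theorem stmt_14 (q d e l : ℕ) (hq : IsPrimePow q) (hd : 2 ≤ d) (he : 2 ≤ e) (hl : 1 ≤ l)
    (K F L : Type*) [Field K] [Field F] [Field L]
    [Algebra K F] [Algebra F L] [Algebra K L] [IsScalarTower K F L]
    (hK : Nat.card K = q) (hF : Nat.card F = q ^ d) (hL : Nat.card L = q ^ (d * e)) :
    mu K (TruncAlg L l) ≤ mu K F * mu F (TruncAlg L l) ∧
    muSym K (TruncAlg L l) ≤ muSym K F * muSym F (TruncAlg L l) := by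
  have hq2 : 2 ≤ q := hq.two_le
  have hq0 : q ≠ 0 := by omega
  haveI : Finite F := Nat.finite_of_card_ne_zero (by rw [hF]; positivity)
  haveI : Finite L := Nat.finite_of_card_ne_zero (by rw [hL]; positivity)
  haveI : Finite (TruncAlg L l) := finite_trunc L l
  haveI : Module.Finite K F := Module.Finite.of_finite
  haveI : Module.Finite F (TruncAlg L l) := Module.Finite.of_finite
  have hmemF : mu K F ∈ {n : ℕ | ∃ (φ ψ : Fin n → (F →ₗ[K] K)) (w : Fin n → F),
      ∀ x y : F, x * y = ∑ i, (φ i x * ψ i y) • w i} :=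
    Nat.sInf_mem (mu_set_nonempty K F)
  have hmemA : mu F (TruncAlg L l) ∈ {n : ℕ | ∃ (φ ψ : Fin n → (TruncAlg L l →ₗ[F] F))
      (w : Fin n → TruncAlg L l), ∀ x y : TruncAlg L l, x * y = ∑ i, (φ i x * ψ i y) • w i} :=
    Nat.sInf_mem (mu_set_nonempty F (TruncAlg L l))
  have hmemF' : muSym K F ∈ {n : ℕ | ∃ (φ : Fin n → (F →ₗ[K] K)) (w : Fin n → F),
      ∀ x y : F, x * y = ∑ i, (φ i x * φ i y) • w i} :=
    Nat.sInf_mem (muSym_set_nonempty K F)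
  have hmemA' : muSym F (TruncAlg L l) ∈ {n : ℕ | ∃ (φ : Fin n → (TruncAlg L l →ₗ[F] F))
      (w : Fin n → TruncAlg L l), ∀ x y : TruncAlg L l, x * y = ∑ i, (φ i x * φ i y) • w i} :=
    Nat.sInf_mem (muSym_set_nonempty F (TruncAlg L l))
  exact ⟨Nat.sInf_le (mu_comp_mem hmemF hmemA), Nat.sInf_le (muSym_comp_mem hmemF' hmemA')⟩
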